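/- arXiv:2210.02211 — 3 statements merged into one kernel-verified Lean document; each statement's English description precedes it below -/
import Mathlib

section
/- Let Y(t) be the fundamental solution (Y(0)=I) of ẏ = A(t)·y where A is continuous, p-periodic (A(t+p) = A(t)), and satisfies h·A(t) = A(t+θ)·h for an orthogonal matrix h, where θ = (m/n)·p for integers 1 ≤ m ≤ n. Define the twisted monodromy matrix Y_h = h⁻¹·Y(θ). Then the monodromy matrix satisfies Y(p)^m = h^n · Y_h^n. -/
open Set

/-- Uniqueness for the linear ODE `f' = B t (f t)` with `B` continuous. -/
theorem linear_ode_unique {E : Type*} [NormedAddCommGroup E] [NormedSpace ℝ E]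
    (B : ℝ → (E →L[ℝ] E)) (hB : Continuous B)
    (f g : ℝ → E)
    (hf : ∀ t, HasDerivAt f (B t (f t)) t)
    (hg : ∀ t, HasDerivAt g (B t (g t)) t)
    (h0 : f 0 = g 0) : f = g := by
  funext t₁
  rcases eq_or_ne t₁ 0 with rfl | _
  · exact h0
  set a : ℝ := min 0 t₁ - 1 with ha
  set b : ℝ := max 0 t₁ + 1 with hb
  have hab0 : (0:ℝ) ∈ Ioo a b := by
    constructor
    · have := min_le_left 0 t₁; simp only [ha]; linarith
    · have := le_max_left 0 t₁; simp only [hb]; linarith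
  have hab1 : t₁ ∈ Icc a b := by
    constructor
    · have := min_le_right 0 t₁; simp only [ha]; linarith
    · have := le_max_right 0 t₁; simp only [hb]; linarith
  set c : ℝ → ℝ := fun t => max a (min b t) with hc
  obtain ⟨C, hC⟩ := (isCompact_Icc (a := a) (b := b)).exists_bound_of_continuousOn
    hB.continuousOn
  have hcmem : ∀ t, c t ∈ Icc a b := by
    intro t
    refine ⟨le_max_left _ _, max_le (le_of_lt (lt_of_lt_of_le hab0.1 hab0.2.le)) (min_le_left _ _)⟩
  set v : ℝ → E → E := fun t x => B (c t) x with hv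
  have hlip : ∀ t, LipschitzOnWith C.toNNReal (v t) univ := by
    intro t
    apply LipschitzWith.lipschitzOnWith
    refine (B (c t)).lipschitz.weaken ?_
    have h1 : ‖B (c t)‖ ≤ max C 0 := le_trans (hC (c t) (hcmem t)) (le_max_left _ _)
    rw [← NNReal.coe_le_coe]
    simpa [Real.coe_toNNReal'] using h1
  have hceq : ∀ t ∈ Ioo a b, c t = t := by
    intro t ht
    simp only [hc]
    rw [min_eq_right ht.2.le, max_eq_right ht.1.le]
  have := ODE_solution_unique_of_mem_Icc (v := v) (s := fun _ => univ) (fun t _ => hlip t) hab0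
    (fun t _ => (hf t).continuousAt.continuousWithinAt)
    (fun t ht => by rw [hv]; simp only; rw [hceq t ht]; exact hf t)
    (fun _ _ => mem_univ _)
    (fun t _ => (hg t).continuousAt.continuousWithinAt)
    (fun t ht => by rw [hv]; simp only; rw [hceq t ht]; exact hg t)
    (fun _ _ => mem_univ _) h0
  exact this hab1

/-- Let `Y` be the fundamental solution (`Y(0)=I`) of `ẏ = A(t)y`
with `A` continuous, `p`-periodic, and `h A(t) = A(t+θ) h` for an orthogonal
linear map `h`, where `θ = (m/n)p` with `1 ≤ m ≤ n`. With the twisted monodromy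
operator `Y_h = h⁻¹ Y(θ)`, the monodromy operator satisfies
`Y(p)^m = h^n Y_h^n`. -/
theorem stmt6 (N : ℕ)
    (A : ℝ → (EuclideanSpace ℝ (Fin N) →L[ℝ] EuclideanSpace ℝ (Fin N)))
    (hA : Continuous A)
    (p : ℝ) (hp : 0 < p) (hper : ∀ t : ℝ, A (t + p) = A t)
    (h : EuclideanSpace ℝ (Fin N) ≃L[ℝ] EuclideanSpace ℝ (Fin N))
    (horth : ∀ v, ‖h v‖ = ‖v‖)
    (m n : ℕ) (hm : 1 ≤ m) (hmn : m ≤ n)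
    (θ : ℝ) (hθ : θ = ((m : ℝ) / (n : ℝ)) * p)
    (hsym : ∀ (t : ℝ) (v : EuclideanSpace ℝ (Fin N)), h (A t v) = A (t + θ) (h v))
    (Y : ℝ → (EuclideanSpace ℝ (Fin N) →L[ℝ] EuclideanSpace ℝ (Fin N)))
    (hY0 : Y 0 = ContinuousLinearMap.id ℝ (EuclideanSpace ℝ (Fin N)))
    (hYd : ∀ t : ℝ, HasDerivAt Y ((A t).comp (Y t)) t) :
    (Y p) ^ m =
      ((h : EuclideanSpace ℝ (Fin N) →L[ℝ] EuclideanSpace ℝ (Fin N))) ^ n *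
        (((h.symm : EuclideanSpace ℝ (Fin N) →L[ℝ] EuclideanSpace ℝ (Fin N))).comp
          (Y θ)) ^ n := by
  set E := EuclideanSpace ℝ (Fin N)
  set hL : E →L[ℝ] E := (h : E →L[ℝ] E) with hhL
  set hS : E →L[ℝ] E := (h.symm : E →L[ℝ] E) with hhS
  set Yh : E →L[ℝ] E := hS.comp (Y θ) with hYh
  -- translation derivative helper
  have htrans : ∀ (c t : ℝ),
      HasDerivAt (fun s => Y (s + c)) ((A (t + c)).comp (Y (t + c))) t := by
    intro c t
    have h1 : HasDerivAt (fun s : ℝ => s + c) 1 t := (hasDerivAt_id t).add_const c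
    have := (hYd (t + c)).scomp (x := t) h1
    simpa [Function.comp_def] using this
  -- Floquet property
  set Bop : ℝ → ((E →L[ℝ] E) →L[ℝ] (E →L[ℝ] E)) :=
    fun t => ContinuousLinearMap.compL ℝ E E E (A t) with hBop
  have hBopc : Continuous Bop := (ContinuousLinearMap.compL ℝ E E E).continuous.comp hA
  have flo : ∀ t : ℝ, Y (t + p) = (Y t).comp (Y p) := by
    have key := linear_ode_unique Bop hBopc (fun t => Y (t + p)) (fun t => (Y t).comp (Y p))
      (fun t => by
        have h1 := htrans p t
        rw [hper t] at h1
        simpa [hBop] using h1)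
      (fun t => by
        have h1 := ((ContinuousLinearMap.compL ℝ E E E).flip (Y p)).hasFDerivAt.comp_hasDerivAt
          t (hYd t)
        simpa [hBop, Function.comp_def, ContinuousLinearMap.comp_assoc] using h1)
      (by simp [hY0])
    exact fun t => congrFun key t
  -- symmetry property
  have sym : ∀ t : ℝ, Y (t + θ) = hL.comp ((Y t).comp Yh) := by
    set Bop2 : ℝ → ((E →L[ℝ] E) →L[ℝ] (E →L[ℝ] E)) :=
      fun t => ContinuousLinearMap.compL ℝ E E E (A (t + θ)) with hBop2
    have hBop2c : Continuous Bop2 :=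
      (ContinuousLinearMap.compL ℝ E E E).continuous.comp
        (hA.comp (continuous_id.add continuous_const))
    set L : (E →L[ℝ] E) →L[ℝ] (E →L[ℝ] E) :=
      (ContinuousLinearMap.compL ℝ E E E hL).comp
        ((ContinuousLinearMap.compL ℝ E E E).flip Yh) with hLdef
    have key := linear_ode_unique Bop2 hBop2c
      (fun t => Y (t + θ)) (fun t => hL.comp ((Y t).comp Yh))
      (fun t => by simpa [hBop2] using htrans θ t)
      (fun t => by
        have hd := L.hasFDerivAt.comp_hasDerivAt t (hYd t)
        have heq : L ((A t).comp (Y t)) = Bop2 t (hL.comp ((Y t).comp Yh)) := by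
          ext v
          simp [hLdef, hBop2, hhL, hsym]
        rw [heq] at hd
        have hfeq : (⇑L ∘ Y) = fun s => hL.comp ((Y s).comp Yh) := by
          funext s
          simp [hLdef]
        rwa [hfeq] at hd)
      (by
        ext v
        simp [hY0, hYh, hhL, hhS])
    exact fun t => congrFun key t
  -- iterate Floquet
  have hk1 : ∀ k : ℕ, Y (k * p) = (Y p) ^ k := by
    intro k
    induction k with
    | zero => simp [hY0]; rfl
    | succ k ih =>
      have hcast : ((k + 1 : ℕ) : ℝ) * p = (k : ℝ) * p + p := by push_cast; ring
      rw [hcast, flo, ih, pow_succ]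
      rfl
  -- iterate symmetry
  have hk2 : ∀ k : ℕ, Y (k * θ) = hL ^ k * Yh ^ k := by
    intro k
    induction k with
    | zero => simp [hY0]; rfl
    | succ k ih =>
      have hcast : ((k + 1 : ℕ) : ℝ) * θ = (k : ℝ) * θ + θ := by push_cast; ring
      rw [hcast, sym, ih]
      show hL * ((hL ^ k * Yh ^ k) * Yh) = hL ^ (k + 1) * Yh ^ (k + 1)
      rw [pow_succ' hL k, pow_succ Yh k]
      simp only [mul_assoc]
  -- conclude
  have hn0 : (n : ℝ) ≠ 0 := Nat.cast_ne_zero.mpr (by omega)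
  have hmp : (m : ℝ) * p = (n : ℝ) * θ := by
    rw [hθ]; field_simp
  calc (Y p) ^ m = Y ((m : ℝ) * p) := (hk1 m).symm
    _ = Y ((n : ℝ) * θ) := by rw [hmp]
    _ = hL ^ n * Yh ^ n := hk2 n
end

section
/- Let b < 0 be a real number. Then z = 1 is a simple zero of the entire function F(z) = 1 - z·e^{b(1-z)} (i.e. F(1) = 0 and F'(1) ≠ 0), and every other zero μ of F satisfies |μ| > 1. -/
open Complex

/-- For real `b < 0`, `z = 1` is a simple zero of
`F(z) = 1 - z e^{b(1-z)}` (i.e. `F(1) = 0` and `F'(1) ≠ 0`), and every other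
zero `μ` of `F` satisfies `|μ| > 1`. -/
theorem stmt10 (b : ℝ) (hb : b < 0) :
    (1 : ℂ) - 1 * Complex.exp ((b : ℂ) * (1 - 1)) = 0 ∧
    deriv (fun z : ℂ => 1 - z * Complex.exp ((b : ℂ) * (1 - z))) 1 ≠ 0 ∧
    ∀ μ : ℂ, 1 - μ * Complex.exp ((b : ℂ) * (1 - μ)) = 0 → μ ≠ 1 →
      1 < ‖μ‖ := by
  refine ⟨by simp, ?_, ?_⟩
  · have h1 : HasDerivAt (fun z : ℂ => (b:ℂ) * (1 - z)) (-(b:ℂ)) 1 := by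
      simpa using (((hasDerivAt_id (1:ℂ)).const_sub 1).const_mul (b:ℂ))
    have h4 := ((hasDerivAt_id (1:ℂ)).mul h1.cexp).const_sub 1
    rw [show (fun z : ℂ => 1 - z * Complex.exp ((b : ℂ) * (1 - z))) = (fun x : ℂ => 1 - ((id : ℂ → ℂ) * fun x => Complex.exp ((b : ℂ) * (1 - x))) x) from rfl, h4.deriv]
    have hb1 : (b:ℂ) ≠ 1 := by
      intro h
      have : b = 1 := by exact_mod_cast h
      linarith
    simp [Complex.exp_ne_zero, sub_eq_zero]
    intro h
    exact hb1 (by linear_combination h)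
  · intro μ hμ hne
    by_contra h
    push_neg at h
    have heq : μ * Complex.exp ((b:ℂ) * (1 - μ)) = 1 := by
      exact (sub_eq_zero.mp hμ).symm
    have habs : ‖μ‖ * Real.exp (b * (1 - μ.re)) = 1 := by
      have := congrArg (‖·‖) heq
      simpa [map_mul, Complex.norm_exp, Complex.mul_re, Complex.sub_re,
        Complex.ofReal_re, Complex.ofReal_im, Complex.sub_im, Complex.one_re,
        Complex.one_im, mul_sub] using this
    have hre : μ.re ≤ ‖μ‖ := Complex.re_le_norm μ
    have hre1 : μ.re ≤ 1 := le_trans hre h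
    rcases lt_or_eq_of_le hre1 with hlt | heq1
    · have hexp : Real.exp (b * (1 - μ.re)) < 1 := by
        have : b * (1 - μ.re) < 0 := mul_neg_of_neg_of_pos hb (by linarith)
        calc Real.exp (b * (1 - μ.re)) < Real.exp 0 := Real.exp_lt_exp.mpr this
          _ = 1 := Real.exp_zero
      have h0 : 0 ≤ ‖μ‖ := norm_nonneg μ
      nlinarith [Real.exp_pos (b * (1 - μ.re))]
    · have habs1 : ‖μ‖ = 1 := le_antisymm h (heq1 ▸ hre)
      have hsq : μ.re ^ 2 + μ.im ^ 2 = 1 := by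
        have := Complex.sq_norm μ
        rw [habs1] at this
        simpa [Complex.normSq_apply, sq] using this.symm
      have him : μ.im = 0 := by nlinarith
      exact hne (Complex.ext (by simp [← heq1]) (by simp [him]))
end

section
/- Let μ* ∈ ℂ with |μ*| < 1 and let b < 0 be real. Then every solution μ ∈ ℂ of the equation 1 - μ*·z·e^{b(1-z)} = 0 satisfies |μ| ≥ 1. Moreover, every such solution satisfies |μ| > 1. -/
open Complex

/-- For `μ* ∈ ℂ` with `|μ*| < 1` and real `b < 0`, every solution
`μ` of `1 - μ* μ e^{b(1-μ)} = 0` satisfies `|μ| ≥ 1`, and moreover `|μ| > 1`. -/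
theorem stmt11 (μs : ℂ) (hμs : ‖μs‖ < 1) (b : ℝ) (hb : b < 0) :
    ∀ μ : ℂ, 1 - μs * μ * Complex.exp ((b : ℂ) * (1 - μ)) = 0 →
      1 ≤ ‖μ‖ ∧ 1 < ‖μ‖ := by
  intro μ heq
  have heq' : μs * μ * Complex.exp ((b : ℂ) * (1 - μ)) = 1 := by
    linear_combination -heq
  have habs : ‖μs‖ * ‖μ‖ *
      Real.exp (((b : ℂ) * (1 - μ)).re) = 1 := by
    have := congrArg (‖·‖) heq'
    simpa [map_mul, Complex.norm_exp] using this
  have hre : ((b : ℂ) * (1 - μ)).re = b * (1 - μ.re) := by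
    simp [Complex.mul_re]
  rw [hre] at habs
  set r := ‖μ‖ with hr
  have h1 : 1 < r := by
    by_contra h
    push_neg at h
    have hμre : μ.re ≤ r := Complex.re_le_norm μ
    have e1 : Real.exp (b * (1 - μ.re)) ≤ Real.exp (b * (1 - r)) := by
      apply Real.exp_le_exp.mpr
      nlinarith
    have e2 : Real.exp (b * (1 - r)) ≤ 1 := by
      apply Real.exp_le_one_iff.mpr
      nlinarith
    have hr0 : 0 ≤ r := norm_nonneg μ
    have hμs0 : 0 ≤ ‖μs‖ := norm_nonneg μs
    nlinarith [Real.exp_pos (b * (1 - μ.re)), e1.trans e2, mul_nonneg hμs0 hr0]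
  exact ⟨le_of_lt h1, h1⟩
end
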